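/- Let K be a positive integer, let p, h ∈ ℝ^K both lie in the probability simplex Δ_K (nonnegative entries summing to 1), and let λ ∈ ℝ. Then Σ_{a=1}^K p_a · exp( λ·⟨h − p, p − e_a⟩ ) ≤ exp( λ²·‖h − p‖₂²/2 ), where e_a is the a-th standard basis vector, ⟨·,·⟩ is the Euclidean inner product and ‖·‖₂ the Euclidean norm. -/

import Mathlib

open Real


-- core analytic lemma: Bernoulli mgf bound
private theorem bern_mgf (q : ℝ) (hq0 : 0 ≤ q) (hq1 : q ≤ 1) (t : ℝ) (ht : 0 ≤ t) :
    1 - q + q * exp t ≤ exp (q * t + t ^ 2 / 8) := by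
  set D : ℝ → ℝ := fun s => 1 - q + q * exp s with hDdef
  have hDpos : ∀ s : ℝ, 0 < D s := by
    intro s
    rcases eq_or_lt_of_le hq0 with h | h
    · simp [hDdef, ← h]
    · have : 0 < q * exp s := mul_pos h (exp_pos s)
      have : 0 ≤ 1 - q := by linarith
      simp only [hDdef]
      nlinarith [exp_pos s]
  set u : ℝ → ℝ := fun s => q * exp s / D s with hudef
  have hDderiv : ∀ s : ℝ, HasDerivAt D (q * exp s) s := by
    intro s
    exact ((Real.hasDerivAt_exp s).const_mul q).const_add (1 - q)
  have huderiv : ∀ s : ℝ, HasDerivAt u (u s * (1 - u s)) s := by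
    intro s
    have h1 : HasDerivAt (fun s => q * exp s) (q * exp s) s :=
      (Real.hasDerivAt_exp s).const_mul q
    have h2 := (h1.div (hDderiv s) (hDpos s).ne')
    have hne : (1 - q + q * exp s) ≠ 0 := by
      have := (hDpos s).ne'; simpa [hDdef] using this
    refine h2.congr_deriv ?_
    simp only [hudef, hDdef]
    field_simp
  set G : ℝ → ℝ := fun s => q + s / 4 - u s with hGdef
  have hGderiv : ∀ s : ℝ, HasDerivAt G (1 / 4 - u s * (1 - u s)) s := by
    intro s
    exact ((hasDerivAt_id s).div_const 4).const_add q |>.sub (huderiv s)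
  have hGmono : Monotone G := by
    apply monotone_of_deriv_nonneg
    · exact fun s => (hGderiv s).differentiableAt
    · intro s
      rw [(hGderiv s).deriv]
      nlinarith [sq_nonneg (2 * u s - 1)]
  have hG0 : G 0 = 0 := by simp [hGdef, hudef, hDdef]
  have hGnonneg : ∀ s, 0 ≤ s → 0 ≤ G s := fun s hs => hG0 ▸ hGmono hs
  set F : ℝ → ℝ := fun s => q * s + s ^ 2 / 8 - Real.log (D s) with hFdef
  have hFderiv : ∀ s : ℝ, HasDerivAt F (G s) s := by
    intro s
    have h1 : HasDerivAt (fun s : ℝ => q * s + s ^ 2 / 8) (q + s / 4) s := by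
      have := ((hasDerivAt_pow 2 s).div_const 8).const_add 0
      have h2 : HasDerivAt (fun s : ℝ => q * s) q s := by
        simpa using (hasDerivAt_id s).const_mul q
      refine (h2.add ((hasDerivAt_pow 2 s).div_const 8)).congr_deriv ?_
      ring
    have hlog : HasDerivAt (fun s => Real.log (D s)) (u s) s := by
      have := (hDderiv s).log (hDpos s).ne'
      simpa [hudef] using this
    exact h1.sub hlog
  have hFmono : MonotoneOn F (Set.Ici 0) := by
    apply monotoneOn_of_deriv_nonneg (convex_Ici 0)
    · have : Differentiable ℝ F := fun s => (hFderiv s).differentiableAt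
      exact this.continuous.continuousOn
    · intro s _
      exact (hFderiv s).differentiableAt.differentiableWithinAt
    · intro s hs
      rw [(hFderiv s).deriv]
      exact hGnonneg s (le_of_lt (by simpa using hs))
  have hF0 : F 0 = 0 := by simp [hFdef, hDdef]
  have hFt : 0 ≤ F t := by
    have := hFmono (Set.self_mem_Ici) (Set.mem_Ici.mpr ht) ht
    simpa [hF0] using this
  have : Real.log (D t) ≤ q * t + t ^ 2 / 8 := by
    simp only [hFdef] at hFt; linarith
  calc D t = exp (Real.log (D t)) := (Real.exp_log (hDpos t)).symm
    _ ≤ exp (q * t + t ^ 2 / 8) := exp_le_exp.mpr this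


private theorem hoeffding_sum (K : ℕ) (w Y : Fin K → ℝ) (hw : ∀ a, 0 ≤ w a) (hw1 : ∑ a, w a = 1)
    (A B : ℝ) (hAB : A < B) (hY : ∀ a, Y a ∈ Set.Icc A B)
    (hmean : ∑ a, w a * Y a = 0) :
    ∑ a, w a * exp (Y a) ≤ exp ((B - A) ^ 2 / 8) := by
  have ht : 0 < B - A := sub_pos.mpr hAB
  have hA0 : A ≤ 0 := by
    by_contra hc
    push_neg at hc
    have : A * ∑ a, w a ≤ ∑ a, w a * Y a := by
      rw [Finset.mul_sum]
      exact Finset.sum_le_sum fun a _ => by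
        rw [mul_comm]
        exact mul_le_mul_of_nonneg_left (hY a).1 (hw a)
    rw [hw1, hmean, mul_one] at this
    linarith
  have hB0 : 0 ≤ B := by
    by_contra hc
    push_neg at hc
    have : ∑ a, w a * Y a ≤ B * ∑ a, w a := by
      rw [Finset.mul_sum]
      exact Finset.sum_le_sum fun a _ => by
        rw [mul_comm (B)]
        exact mul_le_mul_of_nonneg_left (hY a).2 (hw a)
    rw [hw1, hmean, mul_one] at this
    linarith
  -- pointwise convexity bound
  have hconv : ∀ a, exp (Y a) ≤ ((B - Y a) * exp A + (Y a - A) * exp B) / (B - A) := by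
    intro a
    have h1 : (B - Y a) / (B - A) + (Y a - A) / (B - A) = 1 := by field_simp; ring
    have h2 : 0 ≤ (B - Y a) / (B - A) := div_nonneg (by linarith [(hY a).2]) ht.le
    have h3 : 0 ≤ (Y a - A) / (B - A) := div_nonneg (by linarith [(hY a).1]) ht.le
    have := convexOn_exp.2 (Set.mem_univ A) (Set.mem_univ B) h2 h3 h1
    simp only [smul_eq_mul] at this
    have h4 : (B - Y a) / (B - A) * A + (Y a - A) / (B - A) * B = Y a := by
      field_simp; ring
    rw [h4] at this
    calc exp (Y a) ≤ (B - Y a) / (B - A) * exp A + (Y a - A) / (B - A) * exp B := this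
      _ = ((B - Y a) * exp A + (Y a - A) * exp B) / (B - A) := by ring
  have hsum : ∑ a, w a * exp (Y a) ≤ (B * exp A - A * exp B) / (B - A) := by
    calc ∑ a, w a * exp (Y a)
        ≤ ∑ a, w a * (((B - Y a) * exp A + (Y a - A) * exp B) / (B - A)) :=
          Finset.sum_le_sum fun a _ => mul_le_mul_of_nonneg_left (hconv a) (hw a)
      _ = ((∑ a, w a * (B - Y a)) * exp A + (∑ a, w a * (Y a - A)) * exp B) / (B - A) := by
          rw [Finset.sum_mul, Finset.sum_mul, ← Finset.sum_add_distrib, Finset.sum_div]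
          congr 1; ext a; field_simp
      _ = (B * exp A - A * exp B) / (B - A) := by
          have e1 : ∑ a, w a * (B - Y a) = B := by
            simp only [mul_sub]
            rw [Finset.sum_sub_distrib, ← Finset.sum_mul, hw1, hmean]; ring
          have e2 : ∑ a, w a * (Y a - A) = -A := by
            simp only [mul_sub]
            rw [Finset.sum_sub_distrib, ← Finset.sum_mul, hw1, hmean]; ring
          rw [e1, e2]; ring
  set q : ℝ := -A / (B - A) with hqdef
  have hq0 : 0 ≤ q := div_nonneg (by linarith) ht.le
  have hq1 : q ≤ 1 := by rw [div_le_one ht]; linarith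
  have key := bern_mgf q hq0 hq1 (B - A) ht.le
  have heq : (B * exp A - A * exp B) / (B - A) = exp A * (1 - q + q * exp (B - A)) := by
    rw [hqdef]
    rw [Real.exp_sub]
    rw [div_eq_iff ht.ne']
    field_simp
    ring
  have hqt : q * (B - A) = -A := by rw [hqdef]; field_simp
  calc ∑ a, w a * exp (Y a) ≤ (B * exp A - A * exp B) / (B - A) := hsum
    _ = exp A * (1 - q + q * exp (B - A)) := heq
    _ ≤ exp A * exp (q * (B - A) + (B - A) ^ 2 / 8) :=
        mul_le_mul_of_nonneg_left key (exp_pos A).le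
    _ = exp ((B - A) ^ 2 / 8) := by rw [← Real.exp_add, hqt]; ring_nf


open scoped BigOperators

/-- **Sub-Gaussianity claim in the proof of Lemma 3.** For `a` drawn from `p`, the zero-mean
random variable `⟨h − p, p − e_a⟩` is `‖h − p‖₂²`-sub-Gaussian. Here `e a` is the `a`-th
standard basis vector; inner products and squared norms are written as sums. -/
theorem stmt_7 (K : ℕ) (hK : 0 < K) (p h : Fin K → ℝ)
    (hp : p ∈ stdSimplex ℝ (Fin K)) (hh : h ∈ stdSimplex ℝ (Fin K)) (lam : ℝ) :
    ∑ a : Fin K, p a * Real.exp (lam *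
        ∑ i : Fin K, (h i - p i) * (p i - (if i = a then 1 else 0))) ≤
      Real.exp (lam ^ 2 * (∑ i : Fin K, (h i - p i) ^ 2) / 2) := by
  obtain ⟨hp0, hp1⟩ := hp
  obtain ⟨hh0, hh1⟩ := hh
  set c : ℝ := ∑ i, (h i - p i) * p i with hcdef
  set S : ℝ := ∑ i, (h i - p i) ^ 2 with hSdef
  have hS0 : 0 ≤ S := Finset.sum_nonneg fun i _ => sq_nonneg _
  -- rewrite the inner exponent
  have hexp : ∀ a : Fin K,
      (∑ i : Fin K, (h i - p i) * (p i - (if i = a then 1 else 0))) = c - (h a - p a) := by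
    intro a
    have e0 : (∑ i : Fin K, (h i - p i) * (p i - (if i = a then 1 else 0)))
        = (∑ i : Fin K, (h i - p i) * p i)
          - ∑ i : Fin K, (h i - p i) * (if i = a then 1 else 0) := by
      rw [← Finset.sum_sub_distrib]
      exact Finset.sum_congr rfl fun i _ => by ring
    rw [e0, ← hcdef]
    congr 1
    simp [mul_ite]
  set Y : Fin K → ℝ := fun a => lam * (c - (h a - p a)) with hYdef
  have hc' : ∑ a, p a * (h a - p a) = c := by
    rw [hcdef]; exact Finset.sum_congr rfl fun a _ => mul_comm _ _
  have hmean : ∑ a, p a * Y a = 0 := by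
    have e1 : ∑ a, p a * Y a
        = (lam * c) * (∑ a, p a) - lam * (∑ a, p a * (h a - p a)) := by
      calc ∑ a, p a * Y a
          = ∑ a, ((lam * c) * p a - lam * (p a * (h a - p a))) :=
            Finset.sum_congr rfl fun a _ => by simp only [hYdef]; ring
        _ = (∑ a, (lam * c) * p a) - ∑ a, lam * (p a * (h a - p a)) :=
            Finset.sum_sub_distrib _ _
        _ = (lam * c) * (∑ a, p a) - lam * ∑ a, p a * (h a - p a) := by
            rw [← Finset.mul_sum, ← Finset.mul_sum]
    rw [e1, hp1, hc']; ring
  set σ : ℝ := Real.sqrt S with hσdef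
  have hσsq : σ ^ 2 = S := Real.sq_sqrt hS0
  have hxa : ∀ a, |h a - p a| ≤ σ := by
    intro a
    rw [hσdef, ← Real.sqrt_sq_eq_abs]
    exact Real.sqrt_le_sqrt (Finset.single_le_sum (fun i (_ : i ∈ Finset.univ) =>
      sq_nonneg (h i - p i)) (Finset.mem_univ a))
  rcases eq_or_lt_of_le (abs_nonneg lam) with hlam | hlam
  · -- lam = 0
    have hl : lam = 0 := by simpa using hlam.symm
    simp [hl, hp1]
  rcases eq_or_lt_of_le hS0 with hS | hS
  · -- S = 0 : all coordinates of h - p vanish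
    have hx0 : ∀ i, h i - p i = 0 := by
      intro i
      have h1 := (Finset.sum_eq_zero_iff_of_nonneg
        (fun i (_ : i ∈ Finset.univ) => sq_nonneg (h i - p i))).mp hS.symm
      exact pow_eq_zero_iff (two_ne_zero) |>.mp (h1 i (Finset.mem_univ i))
    have hc0 : c = 0 := by
      rw [hcdef]; exact Finset.sum_eq_zero fun i _ => by rw [hx0 i]; ring
    have hz : ∀ a : Fin K,
        (∑ i : Fin K, (h i - p i) * (p i - (if i = a then 1 else 0))) = 0 := by
      intro a; rw [hexp a, hc0, hx0 a]; ring
    simp only [hz, mul_zero, Real.exp_zero, mul_one, hp1]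
    rw [← hS]
    norm_num
  -- main case
  have hσpos : 0 < σ := Real.sqrt_pos.mpr hS
  have hls : 0 < |lam| * σ := mul_pos hlam hσpos
  have hY : ∀ a, Y a ∈ Set.Icc (lam * c - |lam| * σ) (lam * c + |lam| * σ) := by
    intro a
    have h1 : |Y a - lam * c| ≤ |lam| * σ := by
      have e2 : Y a - lam * c = lam * (-(h a - p a)) := by simp only [hYdef]; ring
      rw [e2, abs_mul, abs_neg]
      exact mul_le_mul_of_nonneg_left (hxa a) (abs_nonneg lam)
    rw [abs_le] at h1
    constructor <;> [linarith [h1.1]; linarith [h1.2]]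
  have hAB : lam * c - |lam| * σ < lam * c + |lam| * σ := by linarith
  have key := hoeffding_sum K p Y hp0 hp1 _ _ hAB hY hmean
  have hBA : (lam * c + |lam| * σ - (lam * c - |lam| * σ)) ^ 2 / 8
      = lam ^ 2 * S / 2 := by
    nlinarith [hσsq, sq_abs lam]
  rw [hBA] at key
  calc ∑ a : Fin K, p a * Real.exp (lam *
        ∑ i : Fin K, (h i - p i) * (p i - (if i = a then 1 else 0)))
      = ∑ a, p a * Real.exp (Y a) := by
        exact Finset.sum_congr rfl fun a _ => by rw [hexp a]
    _ ≤ Real.exp (lam ^ 2 * S / 2) := key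
    _ = Real.exp (lam ^ 2 * (∑ i : Fin K, (h i - p i) ^ 2) / 2) := by rw [← hSdef]
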